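/- Let G be an abelian group with no elements of order 2 (that is, x + x = 0 implies x = 0). Then G ↛ (1)_2^{⟨·⟩}: there exists a colouring c : G → {0,1} such that for no nontrivial subgroup H ⊆ G (i.e., H ≠ {0}) is the set H \ {0} monochromatic for c. -/

import Mathlib

/-- If `G` is an abelian group with no elements of order `2`, then
`G ↛ (1)_2^⟨·⟩`: there is a colouring `c : G → {0,1}` such that for no nontrivial
subgroup `H ⊆ G` is `H \ {0}` monochromatic. -/
theorem stmt_14 (G : Type*) [AddCommGroup G] (h2 : ∀ x : G, x + x = 0 → x = 0) :
    ∃ c : G → Fin 2, ∀ H : AddSubgroup G, H ≠ ⊥ →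
      ¬ ∃ k, ∀ x ∈ H, x ≠ 0 → c x = k := by
  classical
  refine ⟨fun x => if WellOrderingRel x (-x) then 0 else 1, ?_⟩
  rintro H hH ⟨k, hk⟩
  obtain ⟨x, hxH, hx0⟩ : ∃ x ∈ H, x ≠ 0 := by
    by_contra h
    push_neg at h
    refine hH ?_
    ext y
    simp only [AddSubgroup.mem_bot]
    exact ⟨fun hy => h y hy, fun hy => hy ▸ H.zero_mem⟩
  have hxne : x ≠ -x := fun h => hx0 (h2 x (add_eq_zero_iff_eq_neg.mpr h))
  have hnx0 : (-x : G) ≠ 0 := fun h => hx0 (neg_eq_zero.mp h)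
  have h1 := hk x hxH hx0
  have h3 := hk (-x) (H.neg_mem hxH) hnx0
  simp only [neg_neg] at h1 h3
  rcases trichotomous_of (WellOrderingRel (α := G)) x (-x) with h | h | h
  · have h' : ¬ WellOrderingRel (-x) x := fun h'' =>
      asymm_of (WellOrderingRel (α := G)) h h''
    rw [if_pos h] at h1
    rw [if_neg h'] at h3
    rw [← h1] at h3
    exact absurd h3 (by decide)
  · exact hxne h
  · have h' : ¬ WellOrderingRel x (-x) := fun h'' =>
      asymm_of (WellOrderingRel (α := G)) h h''
    rw [if_neg h'] at h1
    rw [if_pos h] at h3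
    rw [← h1] at h3
    exact absurd h3 (by decide)
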